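/- Completeness of weak forcing: for any structure A, tuple ā ∈ A, and infinitary formula ψ, either A ⊩* ψ(ā) or A ⊩* ¬ψ(ā) (and not both). -/

import Mathlib

open FirstOrder

universe u

namespace InfinitaryForcing

variable (L : FirstOrder.Language.{u, u})

/-- Infinitary formulas of `L_{∞,ω}`: set-indexed conjunctions and disjunctions,
finitary quantification, free variables among `Fin n`. -/
inductive InfForm : ℕ → Type (u + 1)
  | equal {n : ℕ} (t₁ t₂ : L.Term (Fin n)) : InfForm n
  | rel {n l : ℕ} (R : L.Relations l) (ts : Fin l → L.Term (Fin n)) : InfForm n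
  | not {n : ℕ} (φ : InfForm n) : InfForm n
  | disj {n : ℕ} {ι : Type u} (Φ : ι → InfForm n) : InfForm n
  | conj {n : ℕ} {ι : Type u} (Φ : ι → InfForm n) : InfForm n
  | ex {n : ℕ} (φ : InfForm (n + 1)) : InfForm n
  | all {n : ℕ} (φ : InfForm (n + 1)) : InfForm n

variable {L}

/-- Tarskian satisfaction for infinitary formulas. -/
def Realize : ∀ {n : ℕ}, InfForm L n → ∀ (M : Type u), L.Structure M → (Fin n → M) → Prop
  | _, .equal t₁ t₂, _M, S, v => letI := S; t₁.realize v = t₂.realize v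
  | _, .rel R ts, _M, S, v => letI := S; Language.Structure.RelMap R fun i => (ts i).realize v
  | _, .not φ, M, S, v => ¬ Realize φ M S v
  | _, .disj Φ, M, S, v => ∃ i, Realize (Φ i) M S v
  | _, .conj Φ, M, S, v => ∀ i, Realize (Φ i) M S v
  | _, .ex φ, M, S, v => ∃ b : M, Realize φ M S (Fin.snoc v b)
  | _, .all φ, M, S, v => ∀ b : M, Realize φ M S (Fin.snoc v b)

/-- Elementary embeddings, with the structures made explicit. -/
abbrev ElemEmb (M N : Type u) (SM : L.Structure M) (SN : L.Structure N) : Type u :=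
  @FirstOrder.Language.ElementaryEmbedding L M N SM SN

/-- The strong forcing relation `A ⊩ ψ(ā)`, where conditions are structures
ordered by elementary extension. -/
def Forces : ∀ {n : ℕ}, InfForm L n → ∀ (M : Type u), L.Structure M → (Fin n → M) → Prop
  | _, .equal t₁ t₂, _M, S, v => letI := S; t₁.realize v = t₂.realize v
  | _, .rel R ts, _M, S, v => letI := S; Language.Structure.RelMap R fun i => (ts i).realize v
  | _, .not φ, M, S, v =>
      ∀ (N : Type u) (SN : L.Structure N) (f : ElemEmb M N S SN),
        ¬ Forces φ N SN (fun i => f.toFun (v i))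
  | _, .disj Φ, M, S, v => ∃ i, Forces (Φ i) M S v
  | _, .conj Φ, M, S, v =>
      ∀ (N : Type u) (SN : L.Structure N) (f : ElemEmb M N S SN) (i : _),
        ∃ (P : Type u) (SP : L.Structure P) (g : ElemEmb N P SN SP),
          Forces (Φ i) P SP (fun k => g.toFun (f.toFun (v k)))
  | _, .ex φ, M, S, v => ∃ b : M, Forces φ M S (Fin.snoc v b)
  | _, .all φ, M, S, v =>
      ∀ (N : Type u) (SN : L.Structure N) (f : ElemEmb M N S SN) (b : N),
        ∃ (P : Type u) (SP : L.Structure P) (g : ElemEmb N P SN SP),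
          Forces φ P SP (Fin.snoc (fun k => g.toFun (f.toFun (v k))) (g.toFun b))

/-- `M` decides `ψ(v)` if it strongly forces `ψ(v)` or `¬ψ(v)`. -/
def Decides {n : ℕ} (ψ : InfForm L n) (M : Type u) (S : L.Structure M) (v : Fin n → M) : Prop :=
  Forces ψ M S v ∨ Forces ψ.not M S v

/-- The weak forcing relation `A ⊩* ψ := A ⊩ ¬¬ψ`. -/
def WForces {n : ℕ} (ψ : InfForm L n) (M : Type u) (S : L.Structure M) (v : Fin n → M) : Prop :=
  Forces ψ.not.not M S v

variable (L)

/-- Finitary (`L_{ω,ω}`) formulas among the infinitary ones. -/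
inductive InfForm.IsFinitary : ∀ {n : ℕ}, InfForm L n → Prop
  | equal {n} (t₁ t₂ : L.Term (Fin n)) : IsFinitary (.equal t₁ t₂)
  | rel {n l} (R : L.Relations l) (ts : Fin l → L.Term (Fin n)) : IsFinitary (.rel R ts)
  | not {n} {φ : InfForm L n} : IsFinitary φ → IsFinitary φ.not
  | disj {n} {ι : Type u} (_ : Finite ι) {Φ : ι → InfForm L n} :
      (∀ i, IsFinitary (Φ i)) → IsFinitary (.disj Φ)
  | conj {n} {ι : Type u} (_ : Finite ι) {Φ : ι → InfForm L n} :
      (∀ i, IsFinitary (Φ i)) → IsFinitary (.conj Φ)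
  | ex {n} {φ : InfForm L (n + 1)} : IsFinitary φ → IsFinitary φ.ex
  | all {n} {φ : InfForm L (n + 1)} : IsFinitary φ → IsFinitary φ.all

/-- Quantifier-free infinitary formulas. -/
inductive InfForm.IsQF : ∀ {n : ℕ}, InfForm L n → Prop
  | equal {n} (t₁ t₂ : L.Term (Fin n)) : IsQF (.equal t₁ t₂)
  | rel {n l} (R : L.Relations l) (ts : Fin l → L.Term (Fin n)) : IsQF (.rel R ts)
  | not {n} {φ : InfForm L n} : IsQF φ → IsQF φ.not
  | disj {n} {ι : Type u} {Φ : ι → InfForm L n} : (∀ i, IsQF (Φ i)) → IsQF (.disj Φ)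
  | conj {n} {ι : Type u} {Φ : ι → InfForm L n} : (∀ i, IsQF (Φ i)) → IsQF (.conj Φ)

/-- `L_{ω₁,ω}` formulas: all conjunctions and disjunctions are countable. -/
inductive InfForm.IsCtble : ∀ {n : ℕ}, InfForm L n → Prop
  | equal {n} (t₁ t₂ : L.Term (Fin n)) : IsCtble (.equal t₁ t₂)
  | rel {n l} (R : L.Relations l) (ts : Fin l → L.Term (Fin n)) : IsCtble (.rel R ts)
  | not {n} {φ : InfForm L n} : IsCtble φ → IsCtble φ.not
  | disj {n} {ι : Type u} (_ : Countable ι) {Φ : ι → InfForm L n} :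
      (∀ i, IsCtble (Φ i)) → IsCtble (.disj Φ)
  | conj {n} {ι : Type u} (_ : Countable ι) {Φ : ι → InfForm L n} :
      (∀ i, IsCtble (Φ i)) → IsCtble (.conj Φ)
  | ex {n} {φ : InfForm L (n + 1)} : IsCtble φ → IsCtble φ.ex
  | all {n} {φ : InfForm L (n + 1)} : IsCtble φ → IsCtble φ.all

/-- A fragment of `L_{∞,ω}`: a family of sets of formulas closed under negation
and subformulas. -/
structure IsFragment (𝔸 : ∀ n : ℕ, Set (InfForm L n)) : Prop where
  not_mem : ∀ {n} {φ : InfForm L n}, φ ∈ 𝔸 n → φ.not ∈ 𝔸 n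
  of_not : ∀ {n} {φ : InfForm L n}, φ.not ∈ 𝔸 n → φ ∈ 𝔸 n
  of_disj : ∀ {n} {ι : Type u} {Φ : ι → InfForm L n}, InfForm.disj Φ ∈ 𝔸 n → ∀ i, Φ i ∈ 𝔸 n
  of_conj : ∀ {n} {ι : Type u} {Φ : ι → InfForm L n}, InfForm.conj Φ ∈ 𝔸 n → ∀ i, Φ i ∈ 𝔸 n
  of_ex : ∀ {n} {φ : InfForm L (n + 1)}, φ.ex ∈ 𝔸 n → φ ∈ 𝔸 (n + 1)
  of_all : ∀ {n} {φ : InfForm L (n + 1)}, φ.all ∈ 𝔸 n → φ ∈ 𝔸 (n + 1)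

variable {L}

/-- `G` is `𝔸`-generic if it decides every instance of every formula of `𝔸`. -/
def IsGeneric (𝔸 : ∀ n : ℕ, Set (InfForm L n)) (G : Type u) (SG : L.Structure G) : Prop :=
  ∀ (n : ℕ) (ψ : InfForm L n), ψ ∈ 𝔸 n → ∀ v : Fin n → G, Decides ψ G SG v

variable (L)

mutual
  /-- Finitary `∃ₙ` formulas: `n` alternating blocks of quantifiers beginning
  with existentials, counting finite conjunctions/disjunctions as free. -/
  inductive IsEx : ℕ → ∀ {k : ℕ}, InfForm L k → Prop
    | equal {m k} (t₁ t₂ : L.Term (Fin k)) : IsEx m (.equal t₁ t₂)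
    | rel {m k l} (R : L.Relations l) (ts : Fin l → L.Term (Fin k)) : IsEx m (.rel R ts)
    | not {m k} {φ : InfForm L k} : IsAll m φ → IsEx m φ.not
    | disj {m k} {ι : Type u} (_ : Finite ι) {Φ : ι → InfForm L k} :
        (∀ i, IsEx m (Φ i)) → IsEx m (.disj Φ)
    | conj {m k} {ι : Type u} (_ : Finite ι) {Φ : ι → InfForm L k} :
        (∀ i, IsEx m (Φ i)) → IsEx m (.conj Φ)
    | ex {m k} {φ : InfForm L (k + 1)} : IsEx m φ → 1 ≤ m → IsEx m φ.ex
    | exStep {m k} {φ : InfForm L (k + 1)} : IsAll m φ → IsEx (m + 1) φ.ex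

  /-- Finitary `∀ₙ` formulas. -/
  inductive IsAll : ℕ → ∀ {k : ℕ}, InfForm L k → Prop
    | equal {m k} (t₁ t₂ : L.Term (Fin k)) : IsAll m (.equal t₁ t₂)
    | rel {m k l} (R : L.Relations l) (ts : Fin l → L.Term (Fin k)) : IsAll m (.rel R ts)
    | not {m k} {φ : InfForm L k} : IsEx m φ → IsAll m φ.not
    | disj {m k} {ι : Type u} (_ : Finite ι) {Φ : ι → InfForm L k} :
        (∀ i, IsAll m (Φ i)) → IsAll m (.disj Φ)
    | conj {m k} {ι : Type u} (_ : Finite ι) {Φ : ι → InfForm L k} :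
        (∀ i, IsAll m (Φ i)) → IsAll m (.conj Φ)
    | all {m k} {φ : InfForm L (k + 1)} : IsAll m φ → 1 ≤ m → IsAll m φ.all
    | allStep {m k} {φ : InfForm L (k + 1)} : IsEx m φ → IsAll (m + 1) φ.all
end

/-- `f : A → B` is an `n`-elementary map (`A ⪯ₙ B` when `f` is an inclusion):
every finitary `∃ₙ` or `∀ₙ` formula transfers along `f`. -/
def IsNElemMap (n : ℕ) {A B : Type u} (SA : L.Structure A) (SB : L.Structure B)
    (f : A → B) : Prop :=
  ∀ (k : ℕ) (φ : InfForm L k), (IsEx L n φ ∨ IsAll L n φ) →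
    ∀ v : Fin k → A, Realize φ A SA v ↔ Realize φ B SB (fun i => f (v i))

/-- `f : A → B` is an elementary map: every finitary formula transfers along `f`. -/
def IsElemMap {A B : Type u} (SA : L.Structure A) (SB : L.Structure B)
    (f : A → B) : Prop :=
  ∀ (k : ℕ) (φ : InfForm L k), InfForm.IsFinitary L φ →
    ∀ v : Fin k → A, Realize φ A SA v ↔ Realize φ B SB (fun i => f (v i))


section AmalgamationHelpers

open FirstOrder FirstOrder.Language


/-- An empty structure elementarily embeds in any elementarily equivalent structure. -/
noncomputable def elemEmbOfIsEmpty {L : FirstOrder.Language.{u,u}} {M N : Type u} [L.Structure M]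
    [L.Structure N] [IsEmpty M] (h : M ≅[L] N) : M ↪ₑ[L] N where
  toFun := isEmptyElim
  map_formula' := by
    intro n φ x
    match n with
    | 0 =>
      have hx : ∀ (P : Type u) [L.Structure P] (v : Fin 0 → P),
          φ.Realize v ↔ P ⊨ (φ.relabel (isEmptyElim : Fin 0 → Empty)) := by
        intro P _ v
        rw [Sentence.Realize, Formula.realize_relabel]
        exact iff_of_eq (congrArg _ (funext fun i => isEmptyElim i))
      rw [hx N, hx M]
      exact ((elementarilyEquivalent_iff.1 h) _).symm
    | n + 1 => exact isEmptyElim (x 0)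

/-- Transfer a realized formula across elementary equivalence. -/
lemma exists_realize_of_equiv {K : FirstOrder.Language.{u,u}} {M₁ M₂ : Type u} [K.Structure M₁]
    [K.Structure M₂] [Nonempty M₂] (h : M₁ ≅[K] M₂) (ρ : K.Formula M₁) (u : M₁ → M₁)
    (hu : ρ.Realize u) : ∃ c : M₁ → M₂, ρ.Realize c := by
  classical
  set s : Set M₁ := ↑ρ.freeVarFinset with hs
  have hsub : ↑ρ.freeVarFinset ⊆ s := Set.Subset.rfl
  have hfin : Finite ↥s := ρ.freeVarFinset.finite_toSet.to_subtype
  set ρ' : K.BoundedFormula ↥s 0 := ρ.restrictFreeVar (Set.inclusion hsub) with hρ'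
  have hres : ∀ (P : Type u) [K.Structure P] (v : M₁ → P) (xs : Fin 0 → P),
      ρ'.Realize (v ∘ (↑)) xs ↔ BoundedFormula.Realize ρ v xs :=
    fun P _ v xs => BoundedFormula.realize_restrictFreeVar' hsub
  set σ : K.Sentence := Formula.iExs (↥s) (Formula.relabel (Sum.inr : ↥s → Empty ⊕ ↥s) ρ')
  have h1 : M₁ ⊨ σ := by
    rw [Sentence.Realize, Formula.realize_iExs]
    exact ⟨u ∘ (↑), Formula.realize_relabel.2 ((hres M₁ u default).2 hu)⟩
  have h2 : M₂ ⊨ σ := (elementarilyEquivalent_iff.1 h σ).1 h1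
  rw [Sentence.Realize, Formula.realize_iExs] at h2
  obtain ⟨i, hi⟩ := h2
  refine ⟨fun m => if hm : m ∈ s then i ⟨m, hm⟩ else Classical.arbitrary M₂, ?_⟩
  rw [Formula.Realize, ← hres M₂ _ default]
  have : ((fun m => if hm : m ∈ s then i ⟨m, hm⟩ else Classical.arbitrary M₂) ∘
      ((↑) : ↥s → M₁)) = i := by
    funext a
    rcases a with ⟨a, ha⟩
    simp only [Function.comp_apply]
    rw [dif_pos ha]
  rw [this]
  exact (Formula.realize_relabel (g := (Sum.inr : ↥s → Empty ⊕ ↥s))).1 hi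


/-- Lift an elementary embedding to the language with constants named by the domain. -/
noncomputable def liftWC {L : FirstOrder.Language.{u,u}} {A N : Type u} [L.Structure A]
    [L.Structure N] (f : A ↪ₑ[L] N) [(constantsOn A).Structure N]
    (hcon : ∀ a : A, ((L.con a : L[[A]].Constants) : N) = f a) :
    A ↪ₑ[L[[A]]] N where
  toFun := f
  map_formula' := by
    intro n φ x
    have hN : φ.Realize (f ∘ x) ↔
        (BoundedFormula.constantsVarsEquiv φ).Realize
          (Sum.elim (fun a => ((L.con a : L[[A]].Constants) : N)) (f ∘ x))
          (default : Fin 0 → N) :=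
      (BoundedFormula.realize_constantsVarsEquiv).symm
    have hA : φ.Realize x ↔
        (BoundedFormula.constantsVarsEquiv φ).Realize
          (Sum.elim (fun a => ((L.con a : L[[A]].Constants) : A)) x)
          (default : Fin 0 → A) :=
      (BoundedFormula.realize_constantsVarsEquiv).symm
    rw [hN, hA]
    have e1 : (Sum.elim (fun a => ((L.con a : L[[A]].Constants) : N)) (f ∘ x)) =
        f ∘ (Sum.elim id x) := by
      funext i; cases i with
      | inl a => exact hcon a
      | inr j => rfl
    have e2 : (Sum.elim (fun a => ((L.con a : L[[A]].Constants) : A)) x) = Sum.elim id x := by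
      funext i; cases i with
      | inl a => rfl
      | inr j => rfl
    rw [e1, e2, show (default : Fin 0 → N) = f ∘ (default : Fin 0 → A) from
      Subsingleton.elim _ _]
    exact f.map_boundedFormula _ _ _

/-- An elementary embedding in an expanded language is elementary in the base language. -/
noncomputable def reductElemEmb {L L' : FirstOrder.Language.{u,u}} (φ : L →ᴸ L') {M N : Type u}
    [L.Structure M] [L.Structure N] [L'.Structure M] [L'.Structure N]
    [φ.IsExpansionOn M] [φ.IsExpansionOn N] (e : M ↪ₑ[L'] N) : M ↪ₑ[L] N where
  toFun := e
  map_formula' := by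
    intro n ψ x
    rw [← LHom.realize_onFormula φ ψ, ← LHom.realize_onFormula φ ψ]
    exact e.map_formula' (φ.onFormula ψ) x

lemma exists_common_extension {K : FirstOrder.Language.{u,u}} (M₁ M₂ : Type u)
    [SM₁ : K.Structure M₁] [SM₂ : K.Structure M₂] [Nonempty M₁] (h : M₁ ≅[K] M₂) :
    ∃ (Q : Type u) (SQ : K.Structure Q),
      Nonempty (@ElementaryEmbedding K M₁ Q SM₁ SQ) ∧
        Nonempty (@ElementaryEmbedding K M₂ Q SM₂ SQ) := by
  classical
  haveI : Nonempty M₂ := h.nonempty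
  set ι₁ : K[[M₁]] →ᴸ K[[M₁ ⊕ M₂]] := K.lhomWithConstantsMap Sum.inl with hι₁
  set ι₂ : K[[M₂]] →ᴸ K[[M₁ ⊕ M₂]] := K.lhomWithConstantsMap Sum.inr with hι₂
  set T : K[[M₁ ⊕ M₂]].Theory :=
    ι₁.onTheory (K.elementaryDiagram M₁) ∪ ι₂.onTheory (K.elementaryDiagram M₂) with hT
  have hsat : T.IsSatisfiable := by
    have hTeq : T = ⋃ (t : Finset (K[[M₁]].Sentence)),
        (ι₁.onTheory (↑t ∩ K.elementaryDiagram M₁) ∪ ι₂.onTheory (K.elementaryDiagram M₂)) := by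
      ext σ
      simp only [Set.mem_iUnion, hT, Set.mem_union, LHom.onTheory, Set.mem_image,
        Set.mem_inter_iff, Finset.mem_coe]
      constructor
      · rintro (⟨τ, hτ, rfl⟩ | hσ)
        · exact ⟨{τ}, Or.inl ⟨τ, ⟨Finset.mem_singleton_self τ, hτ⟩, rfl⟩⟩
        · exact ⟨∅, Or.inr hσ⟩
      · rintro ⟨t, ⟨τ, ⟨_, hτ⟩, rfl⟩ | hσ⟩
        · exact Or.inl ⟨τ, hτ, rfl⟩
        · exact Or.inr hσ
    rw [hTeq, Theory.isSatisfiable_directed_union_iff]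
    swap
    · apply Monotone.directed_le
      intro t₁ t₂ ht
      exact Set.union_subset_union_left _
        (Set.image_mono (Set.inter_subset_inter_left _ (Finset.coe_subset.2 ht)))
    intro t
    set t' : Finset (K[[M₁]].Sentence) := t.filter (· ∈ K.elementaryDiagram M₁) with ht'
    set σstar : K[[M₁]].Sentence := BoundedFormula.iInf (fun τ : t' => (τ : K[[M₁]].Sentence)) with hσstar
    have hM1 : M₁ ⊨ σstar := by
      have : ∀ τ ∈ t', M₁ ⊨ τ := by
        intro τ hτ
        exact mem_completeTheory.1 (Finset.mem_filter.1 hτ).2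
      exact BoundedFormula.realize_iInf.2 (fun b => this b b.2)
    set ρ : K.Formula M₁ := Formula.equivSentence.symm σstar with hρdef
    have hρ : ρ.Realize (fun m => ((K.con m : K[[M₁]].Constants) : M₁)) :=
      (Formula.realize_equivSentence_symm_con M₁ σstar).2 hM1
    obtain ⟨c, hc⟩ := exists_realize_of_equiv h ρ _ hρ
    letI SCon : (constantsOn M₁).Structure M₂ := constantsOn.structure c
    have hcon2 : ∀ m : M₁, ((K.con m : K[[M₁]].Constants) : M₂) = c m := fun m => rfl
    have hσM2 : M₂ ⊨ σstar := by
      refine (Formula.realize_equivSentence_symm_con M₂ σstar).1 ?_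
      rw [show (fun a => ((K.con a : K[[M₁]].Constants) : M₂)) = c from funext hcon2]
      exact hc
    have ht'M2 : ∀ τ ∈ t', M₂ ⊨ τ :=
      fun τ hτ => BoundedFormula.realize_iInf.1 hσM2 ⟨τ, hτ⟩
    letI SC3 : (constantsOn (M₁ ⊕ M₂)).Structure M₂ := constantsOn.structure (Sum.elim c id)
    haveI hexpc1 : (LHom.constantsOnMap (Sum.inl : M₁ → M₁ ⊕ M₂)).IsExpansionOn M₂ :=
      constantsOnMap_isExpansionOn rfl
    haveI hexpc2 : (LHom.constantsOnMap (Sum.inr : M₂ → M₁ ⊕ M₂)).IsExpansionOn M₂ :=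
      constantsOnMap_isExpansionOn rfl
    haveI hexp1 : ι₁.IsExpansionOn M₂ := by
      rw [hι₁]; unfold lhomWithConstantsMap; exact LHom.sumMap_isExpansionOn _ _ _
    haveI hexp2 : ι₂.IsExpansionOn M₂ := by
      rw [hι₂]; unfold lhomWithConstantsMap; exact LHom.sumMap_isExpansionOn _ _ _
    haveI hm1 : M₂ ⊨ (↑t ∩ K.elementaryDiagram M₁ : K[[M₁]].Theory) := by
      refine ⟨fun σ hσ => ?_⟩
      exact ht'M2 σ (Finset.mem_filter.2 ⟨Finset.mem_coe.1 hσ.1, hσ.2⟩)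
    haveI : M₂ ⊨ ι₁.onTheory (↑t ∩ K.elementaryDiagram M₁) ∪
        ι₂.onTheory (K.elementaryDiagram M₂) := by
      refine ((ι₁.onTheory_model _).2 hm1).union ((ι₂.onTheory_model _).2 ?_)
      infer_instance
    exact Theory.Model.isSatisfiable M₂
  obtain ⟨Q0⟩ := hsat
  refine ⟨Q0.Carrier, ?_⟩
  letI SQ3 : K[[M₁ ⊕ M₂]].Structure Q0.Carrier := Q0.struc
  letI SQ1 : K[[M₁]].Structure Q0.Carrier := ι₁.reduct Q0.Carrier
  letI SQ2 : K[[M₂]].Structure Q0.Carrier := ι₂.reduct Q0.Carrier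
  letI SQK : K.Structure Q0.Carrier := (K.lhomWithConstants (M₁ ⊕ M₂)).reduct Q0.Carrier
  haveI hr1 : ι₁.IsExpansionOn Q0.Carrier := LHom.isExpansionOn_reduct ι₁ Q0.Carrier
  haveI hr2 : ι₂.IsExpansionOn Q0.Carrier := LHom.isExpansionOn_reduct ι₂ Q0.Carrier
  haveI e1 : (K.lhomWithConstants M₁).IsExpansionOn Q0.Carrier :=
    ⟨fun f x => rfl, fun R x => rfl⟩
  haveI e2 : (K.lhomWithConstants M₂).IsExpansionOn Q0.Carrier :=
    ⟨fun f x => rfl, fun R x => rfl⟩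
  haveI m1 : Q0.Carrier ⊨ K.elementaryDiagram M₁ :=
    (ι₁.onTheory_model _).1 (Q0.is_model.mono Set.subset_union_left)
  haveI m2 : Q0.Carrier ⊨ K.elementaryDiagram M₂ :=
    (ι₂.onTheory_model _).1 (Q0.is_model.mono Set.subset_union_right)
  exact ⟨SQK, ⟨ElementaryEmbedding.ofModelsElementaryDiagram K M₁ Q0.Carrier⟩,
    ⟨ElementaryEmbedding.ofModelsElementaryDiagram K M₂ Q0.Carrier⟩⟩


theorem elementary_amalgamation' {L : FirstOrder.Language.{u,u}} {A N N' : Type u}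
    (SA : L.Structure A) (SN : L.Structure N) (SN' : L.Structure N')
    (f : @ElementaryEmbedding L A N SA SN) (g : @ElementaryEmbedding L A N' SA SN') :
    ∃ (Q : Type u) (SQ : L.Structure Q) (h : @ElementaryEmbedding L N Q SN SQ)
      (h' : @ElementaryEmbedding L N' Q SN' SQ), ∀ a, h (f a) = h' (g a) := by
  letI := SA; letI := SN; letI := SN'
  rcases isEmpty_or_nonempty N with hN | hN
  · have hNN' : N ≅[L] N' := f.elementarilyEquivalent.symm.trans g.elementarilyEquivalent
    haveI : IsEmpty A := ⟨fun a => IsEmpty.false (f a)⟩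
    refine ⟨N', SN', elemEmbOfIsEmpty hNN', ElementaryEmbedding.refl L N', fun a => ?_⟩
    exact isEmptyElim a
  · letI SCN : (constantsOn A).Structure N := constantsOn.structure f
    letI SCN' : (constantsOn A).Structure N' := constantsOn.structure g
    letI SKN : L[[A]].Structure N := Language.withConstantsStructure L A
    letI SKN' : L[[A]].Structure N' := Language.withConstantsStructure L A
    have hconN : ∀ a : A, ((L.con a : L[[A]].Constants) : N) = f a := fun a => rfl
    have hconN' : ∀ a : A, ((L.con a : L[[A]].Constants) : N') = g a := fun a => rfl
    have F : A ↪ₑ[L[[A]]] N := liftWC f hconN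
    have G : A ↪ₑ[L[[A]]] N' := liftWC g hconN'
    have hEq : N ≅[L[[A]]] N' := F.elementarilyEquivalent.symm.trans G.elementarilyEquivalent
    obtain ⟨Q, SQK, ⟨h₁⟩, ⟨h₂⟩⟩ := exists_common_extension N N' hEq
    letI SQL : L.Structure Q := (L.lhomWithConstants A).reduct Q
    haveI : (L.lhomWithConstants A).IsExpansionOn Q :=
      LHom.isExpansionOn_reduct (L.lhomWithConstants A) Q
    haveI expN : (L.lhomWithConstants A).IsExpansionOn N := L.withConstants_expansion A
    haveI expN' : (L.lhomWithConstants A).IsExpansionOn N' := L.withConstants_expansion A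
    refine ⟨Q, SQL, reductElemEmb (L.lhomWithConstants A) h₁,
      reductElemEmb (L.lhomWithConstants A) h₂, fun a => ?_⟩
    show h₁ (f a) = h₂ (g a)
    rw [← hconN a, ← hconN' a]
    rw [ElementaryEmbedding.map_constants, ElementaryEmbedding.map_constants]


end AmalgamationHelpers


section Amalgamation

open FirstOrder Language

theorem elementary_amalgamation {L : FirstOrder.Language.{u, u}} {A N N' : Type u}
    (SA : L.Structure A) (SN : L.Structure N) (SN' : L.Structure N')
    (f : ElemEmb A N SA SN) (g : ElemEmb A N' SA SN') :
    ∃ (Q : Type u) (SQ : L.Structure Q) (h : ElemEmb N Q SN SQ) (h' : ElemEmb N' Q SN' SQ),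
      ∀ a, h.toFun (f.toFun a) = h'.toFun (g.toFun a) :=
  elementary_amalgamation' SA SN SN' f g

end Amalgamation

lemma forces_not_mono {L : FirstOrder.Language.{u, u}} {n : ℕ} (φ : InfForm L n)
    {M N : Type u} (SM : L.Structure M) (SN : L.Structure N) (f : ElemEmb M N SM SN)
    (v : Fin n → M) (h : Forces φ.not M SM v) :
    Forces φ.not N SN (fun i => f.toFun (v i)) :=
  fun P SP g => h P SP (g.comp f)

/-- Completeness of weak forcing: every structure weakly forces `ψ(ā)` or `¬ψ(ā)`,
and never both. -/
theorem stmt12 {L : FirstOrder.Language.{u, u}} {n : ℕ} (ψ : InfForm L n)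
    (A : Type u) (SA : L.Structure A) (v : Fin n → A) :
    (WForces ψ A SA v ∨ WForces ψ.not A SA v) ∧
      ¬ (WForces ψ A SA v ∧ WForces ψ.not A SA v) := by
  constructor
  · by_cases h : WForces ψ A SA v
    · exact Or.inl h
    · refine Or.inr ?_
      have h' : ∃ (N : Type u) (SN : L.Structure N) (f : ElemEmb A N SA SN),
          Forces ψ.not N SN (fun i => f.toFun (v i)) := by
        by_contra hc
        push_neg at hc
        exact h (fun N SN f hf => hc N SN f hf)
      obtain ⟨N, SN, f, hf⟩ := h'
      intro N' SN' g hcon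
      obtain ⟨Q, SQ, hh, hh', hcomm⟩ := elementary_amalgamation SA SN SN' f g
      have h1 : Forces ψ.not Q SQ (fun i => hh.toFun (f.toFun (v i))) :=
        forces_not_mono ψ SN SQ hh _ hf
      have h2 := hcon Q SQ hh'
      rw [show (fun i => hh'.toFun (g.toFun (v i))) = (fun i => hh.toFun (f.toFun (v i)))
        from funext fun i => (hcomm (v i)).symm] at h2
      exact h2 h1
  · rintro ⟨h1, h2⟩
    exact h2 A SA (FirstOrder.Language.ElementaryEmbedding.refl L A) h1


end InfinitaryForcing
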